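/- For n ≥ 2, if z is a complex number with P_n(z) = 0 and P_{n-2}(z) = 0, then z = -1. -/

import Mathlib

def B (n k : ℕ) : ℕ := Nat.choose n ((n - k) / 2)

noncomputable def Pc (n : ℕ) (z : ℂ) : ℂ :=
  ∑ k ∈ Finset.range (n + 1), (B n k : ℂ) * z ^ (n - k)

lemma Pc_eq (n : ℕ) (z : ℂ) :
    Pc n z = ∑ j ∈ Finset.range (n + 1), (Nat.choose n (j / 2) : ℂ) * z ^ j := by
  rw [Pc, ← Finset.sum_range_reflect (fun j => (Nat.choose n (j / 2) : ℂ) * z ^ j) (n + 1)]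
  apply Finset.sum_congr rfl
  intro k hk
  simp [B, Nat.succ_sub_one]

lemma step (N : ℕ) (z : ℂ) :
    (1 + z ^ 2) * (∑ j ∈ Finset.range (N + 1), (Nat.choose N (j / 2) : ℂ) * z ^ j)
      + (Nat.choose N ((N + 1) / 2) : ℂ) * z ^ (N + 1)
    = (∑ j ∈ Finset.range (N + 2), (Nat.choose (N + 1) (j / 2) : ℂ) * z ^ j)
      + (Nat.choose N (N / 2) : ℂ) * z ^ (N + 2) := by
  have hR : (∑ j ∈ Finset.range (N + 2), (Nat.choose (N + 1) (j / 2) : ℂ) * z ^ j)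
      = (∑ j ∈ Finset.range N, ((Nat.choose N (j / 2) : ℂ) + (Nat.choose N (j / 2 + 1) : ℂ)) * z ^ (j + 2)) + z + 1 := by
    rw [Finset.sum_range_succ' _ (N + 1), Finset.sum_range_succ' _ N]
    have h0 : ((Nat.choose (N + 1) (0 / 2) : ℂ)) * z ^ 0 = 1 := by norm_num
    have h1 : ((Nat.choose (N + 1) ((0 + 1) / 2) : ℂ)) * z ^ (0 + 1) = z := by norm_num
    rw [h0, h1]
    congr 1
    congr 1
    apply Finset.sum_congr rfl
    intro j hj
    have hdiv : (j + 1 + 1) / 2 = j / 2 + 1 := by omega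
    rw [hdiv, Nat.choose_succ_succ' N (j / 2)]
    push_cast
    ring
  have hL1 : (∑ j ∈ Finset.range (N + 1), (Nat.choose N (j / 2) : ℂ) * z ^ j)
      + (Nat.choose N ((N + 1) / 2) : ℂ) * z ^ (N + 1)
      = (∑ j ∈ Finset.range N, (Nat.choose N (j / 2 + 1) : ℂ) * z ^ (j + 2)) + z + 1 := by
    have : (∑ j ∈ Finset.range (N + 2), (Nat.choose N (j / 2) : ℂ) * z ^ j)
        = (∑ j ∈ Finset.range (N + 1), (Nat.choose N (j / 2) : ℂ) * z ^ j)
          + (Nat.choose N ((N + 1) / 2) : ℂ) * z ^ (N + 1) := by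
      rw [Finset.sum_range_succ]
    rw [← this, Finset.sum_range_succ' _ (N + 1), Finset.sum_range_succ' _ N]
    have h0 : ((Nat.choose N (0 / 2) : ℂ)) * z ^ 0 = 1 := by norm_num
    have h1 : ((Nat.choose N ((0 + 1) / 2) : ℂ)) * z ^ (0 + 1) = z := by norm_num
    rw [h0, h1]
    congr 1
    congr 1
    apply Finset.sum_congr rfl
    intro j hj
    have hdiv : (j + 1 + 1) / 2 = j / 2 + 1 := by omega
    rw [hdiv]
  have hL2 : z ^ 2 * (∑ j ∈ Finset.range (N + 1), (Nat.choose N (j / 2) : ℂ) * z ^ j)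
      = (∑ j ∈ Finset.range N, (Nat.choose N (j / 2) : ℂ) * z ^ (j + 2))
        + (Nat.choose N (N / 2) : ℂ) * z ^ (N + 2) := by
    rw [Finset.mul_sum, Finset.sum_range_succ]
    congr 1
    · apply Finset.sum_congr rfl
      intro j hj
      ring
    · ring
  have expand : (1 + z ^ 2) * (∑ j ∈ Finset.range (N + 1), (Nat.choose N (j / 2) : ℂ) * z ^ j)
      = (∑ j ∈ Finset.range (N + 1), (Nat.choose N (j / 2) : ℂ) * z ^ j)
        + z ^ 2 * (∑ j ∈ Finset.range (N + 1), (Nat.choose N (j / 2) : ℂ) * z ^ j) := by ring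
  rw [hR, expand, hL2]
  have hsplit : (∑ j ∈ Finset.range N, ((Nat.choose N (j / 2) : ℂ) + (Nat.choose N (j / 2 + 1) : ℂ)) * z ^ (j + 2))
      = (∑ j ∈ Finset.range N, (Nat.choose N (j / 2) : ℂ) * z ^ (j + 2))
        + (∑ j ∈ Finset.range N, (Nat.choose N (j / 2 + 1) : ℂ) * z ^ (j + 2)) := by
    rw [← Finset.sum_add_distrib]
    apply Finset.sum_congr rfl
    intro j hj
    ring
  rw [hsplit]
  -- goal now a rearrangement, use hL1
  linear_combination hL1

lemma pairsum (f : ℕ → ℂ) (k : ℕ) :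
    ∑ j ∈ Finset.range (2 * k), f j = ∑ m ∈ Finset.range k, (f (2 * m) + f (2 * m + 1)) := by
  induction k with
  | zero => simp
  | succ k ih =>
    have h2 : 2 * (k + 1) = (2 * k) + 1 + 1 := by ring
    rw [h2, Finset.sum_range_succ, Finset.sum_range_succ, ih, Finset.sum_range_succ,
      add_assoc]

lemma full (n : ℕ) (z : ℂ) :
    ∑ j ∈ Finset.range (2 * n + 2), (Nat.choose n (j / 2) : ℂ) * z ^ j
      = (1 + z) * (1 + z ^ 2) ^ n := by
  have h2 : 2 * n + 2 = 2 * (n + 1) := by ring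
  rw [h2, pairsum]
  have hbin : (1 + z ^ 2) ^ n = ∑ m ∈ Finset.range (n + 1), (z ^ 2) ^ m * (Nat.choose n m : ℂ) := by
    rw [add_comm]
    rw [add_pow]
    apply Finset.sum_congr rfl
    intro m hm
    ring
  rw [hbin, Finset.mul_sum]
  apply Finset.sum_congr rfl
  intro m hm
  have e1 : (2 * m) / 2 = m := by omega
  have e2 : (2 * m + 1) / 2 = m := by omega
  rw [e1, e2]
  ring

lemma reflect (n : ℕ) (z : ℂ) (hz : z ≠ 0) :
    (∑ j ∈ Finset.range (n + 1), (Nat.choose n (j / 2) : ℂ) * z ^ j)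
      + z ^ (2 * n + 1) * (∑ j ∈ Finset.range (n + 1), (Nat.choose n (j / 2) : ℂ) * z⁻¹ ^ j)
    = (1 + z) * (1 + z ^ 2) ^ n := by
  have t1 : z ^ (2 * n + 1) * (∑ j ∈ Finset.range (n + 1), (Nat.choose n (j / 2) : ℂ) * z⁻¹ ^ j)
      = ∑ i ∈ Finset.range (n + 1), (Nat.choose n ((n + 1 + i) / 2) : ℂ) * z ^ (n + 1 + i) := by
    rw [Finset.mul_sum]
    rw [← Finset.sum_range_reflect
      (fun i => z ^ (2 * n + 1) * ((Nat.choose n (i / 2) : ℂ) * z⁻¹ ^ i)) (n + 1)]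
    apply Finset.sum_congr rfl
    intro i hi
    have hi' : i ≤ n := by have := Finset.mem_range.mp hi; omega
    rw [show n + 1 - 1 - i = n - i from by omega]
    rw [show (n + 1 + i) / 2 = n - (n - i) / 2 from by omega,
      Nat.choose_symm (show (n - i) / 2 ≤ n by omega)]
    have e4 : z ^ (2 * n + 1) = z ^ (n + 1 + i) * z ^ (n - i) := by
      rw [← pow_add]; congr 1; omega
    rw [e4, inv_pow]
    have hzi : z ^ (n - i) ≠ 0 := pow_ne_zero _ hz
    field_simp
  have hfull := full n z
  rw [show 2 * n + 2 = (n + 1) + (n + 1) from by ring] at hfull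
  rw [Finset.sum_range_add (fun j => (Nat.choose n (j / 2) : ℂ) * z ^ j) (n + 1) (n + 1)] at hfull
  rw [t1]
  exact hfull

lemma Pc_conj (n : ℕ) (z : ℂ) :
    Pc n ((starRingEnd ℂ) z) = (starRingEnd ℂ) (Pc n z) := by
  simp [Pc, map_sum, map_mul, map_pow]

lemma Pc_zero (n : ℕ) : Pc n 0 = 1 := by
  rw [Pc_eq]
  rw [Finset.sum_eq_single 0]
  · simp
  · intro j hj hj0
    simp [zero_pow hj0]
  · intro h
    simp at h

lemma Pc_one (n : ℕ) : Pc n 1 ≠ 0 := by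
  rw [Pc_eq]
  simp only [one_pow, mul_one]
  rw [← Nat.cast_sum]
  rw [Nat.cast_ne_zero]
  intro h
  have := (Finset.sum_eq_zero_iff.mp h) 0 (by simp)
  simp [Nat.choose] at this

theorem pascalian_shift_two_common_root (n : ℕ) (hn : 2 ≤ n) (z : ℂ)
    (h1 : Pc n z = 0) (h2 : Pc (n - 2) z = 0) : z = -1 := by
  obtain ⟨N, rfl⟩ : ∃ N, n = N + 2 := ⟨n - 2, by omega⟩
  rw [show N + 2 - 2 = N from by omega] at h2
  have hz0 : z ≠ 0 := by
    intro h
    rw [h, Pc_zero] at h1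
    exact one_ne_zero h1
  have hz1 : z ≠ 1 := by
    intro h
    rw [h] at h1
    exact Pc_one _ h1
  rw [Pc_eq] at h1 h2
  have e1 : Nat.choose N ((N + 1) / 2) = Nat.choose N (N / 2) := by
    rw [show (N + 1) / 2 = N - N / 2 from by omega, Nat.choose_symm (Nat.div_le_self N 2)]
  have e2 : Nat.choose (N + 1) ((N + 2) / 2)
      = Nat.choose N (N / 2) + Nat.choose N ((N + 2) / 2) := by
    rw [show (N + 2) / 2 = N / 2 + 1 from by omega, Nat.choose_succ_succ' N (N / 2)]
  have e3 : Nat.choose (N + 1) ((N + 1 + 1) / 2)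
      = Nat.choose N (N / 2) + Nat.choose N ((N + 2) / 2) := by
    rw [show (N + 1 + 1) / 2 = (N + 2) / 2 from rfl]
    exact e2
  have e4 : Nat.choose (N + 1) ((N + 1) / 2)
      = Nat.choose N (N / 2) + Nat.choose N ((N + 2) / 2) := by
    rw [show (N + 1) / 2 = (N + 1) - (N + 2) / 2 from by omega,
      Nat.choose_symm (show (N + 2) / 2 ≤ N + 1 by omega)]
    exact e2
  have s1 := step N z
  have s2 := step (N + 1) z
  rw [e1] at s1
  rw [e3, e4] at s2
  rw [show N + 1 + 2 = N + 2 + 1 from rfl, show N + 1 + 1 = N + 2 from rfl] at s2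
  push_cast at s1 s2
  set A : ℂ := (Nat.choose N (N / 2) : ℂ) with hA
  set Bb : ℂ := (Nat.choose N ((N + 2) / 2) : ℂ) with hB
  have key : z ^ (N + 1) * (1 - z) * (A * z ^ 2 + (A + Bb) * z + A) = 0 := by
    linear_combination (1 + z ^ 2) * s1 + s2 - (1 + z ^ 2) ^ 2 * h2 + h1
  have haN : 0 < Nat.choose N (N / 2) := Nat.choose_pos (Nat.div_le_self N 2)
  have hA0 : A ≠ 0 := by
    rw [hA, Nat.cast_ne_zero]
    omega
  have quad : A * z ^ 2 + (A + Bb) * z + A = 0 := by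
    rcases mul_eq_zero.mp key with h | h
    · rcases mul_eq_zero.mp h with h' | h'
      · exact absurd h' (pow_ne_zero _ hz0)
      · exact absurd (by linear_combination -h' : z = 1) hz1
    · exact h
  by_cases hab : Nat.choose N ((N + 2) / 2) = Nat.choose N (N / 2)
  · have hABeq : Bb = A := by rw [hA, hB, hab]
    rw [hABeq] at quad
    have hsq : A * (z + 1) ^ 2 = 0 := by linear_combination quad
    have hzz := (mul_eq_zero.mp hsq).resolve_left hA0
    have hz : z + 1 = 0 := by
      exact (pow_eq_zero_iff (two_ne_zero)).mp hzz
    linear_combination hz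
  · have hblt : Nat.choose N ((N + 2) / 2) < Nat.choose N (N / 2) :=
      lt_of_le_of_ne (Nat.choose_le_middle _ _) hab
    have hreal : (starRingEnd ℂ) z ≠ z := by
      intro hc
      have hre : ((z.re : ℝ) : ℂ) = z := Complex.conj_eq_iff_re.mp hc
      rw [← hre, hA, hB] at quad
      have hq : (Nat.choose N (N / 2) : ℝ) * z.re ^ 2
          + ((Nat.choose N (N / 2) : ℝ) + (Nat.choose N ((N + 2) / 2) : ℝ)) * z.re
          + (Nat.choose N (N / 2) : ℝ) = 0 := by exact_mod_cast quad
      have h1' : (1 : ℝ) ≤ (Nat.choose N (N / 2) : ℝ) := by exact_mod_cast haN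
      have h2' : (Nat.choose N ((N + 2) / 2) : ℝ) + 1 ≤ (Nat.choose N (N / 2) : ℝ) := by
        exact_mod_cast hblt
      have h3' : (0 : ℝ) ≤ (Nat.choose N ((N + 2) / 2) : ℝ) := by positivity
      nlinarith [sq_nonneg (2 * (Nat.choose N (N / 2) : ℝ) * z.re
        + ((Nat.choose N (N / 2) : ℝ) + (Nat.choose N ((N + 2) / 2) : ℝ)))]
    have quadc : A * ((starRingEnd ℂ) z) ^ 2 + (A + Bb) * ((starRingEnd ℂ) z) + A = 0 := by
      have hcc := congrArg (starRingEnd ℂ) quad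
      simpa [hA, hB] using hcc
    have hd : z - (starRingEnd ℂ) z ≠ 0 := sub_ne_zero.mpr (fun h => hreal h.symm)
    have hsum : A * (z + (starRingEnd ℂ) z) + (A + Bb) = 0 := by
      have hzero : (z - (starRingEnd ℂ) z) * (A * (z + (starRingEnd ℂ) z) + (A + Bb)) = 0 := by
        linear_combination quad - quadc
      exact (mul_eq_zero.mp hzero).resolve_left hd
    have hmul : z * (starRingEnd ℂ) z = 1 := by
      have h0 : A * (z * (starRingEnd ℂ) z - 1) = 0 := by linear_combination z * hsum - quad
      have := (mul_eq_zero.mp h0).resolve_left hA0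
      linear_combination this
    have hzinv : (starRingEnd ℂ) z = z⁻¹ := eq_inv_of_mul_eq_one_right hmul
    have h2c : (∑ j ∈ Finset.range (N + 1), (Nat.choose N (j / 2) : ℂ) * (z⁻¹) ^ j) = 0 := by
      have hcj := congrArg (starRingEnd ℂ) h2
      rw [map_sum] at hcj
      simpa [map_mul, map_pow, hzinv] using hcj
    have hrefl := reflect N z hz0
    rw [h2, h2c, mul_zero, add_zero] at hrefl
    rcases mul_eq_zero.mp hrefl.symm with hc1 | hc2
    · linear_combination hc1
    · have hN0 : (1 : ℂ) + z ^ 2 = 0 := by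
        rcases pow_eq_zero_iff'.mp hc2 with ⟨h, _⟩
        exact h
      have hz2 : (A + Bb) * z = 0 := by linear_combination quad - A * hN0
      have hAB : A + Bb ≠ 0 := by
        rw [hA, hB, ← Nat.cast_add, Nat.cast_ne_zero]
        omega
      exact absurd ((mul_eq_zero.mp hz2).resolve_left hAB) hz0
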